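/- arXiv:1803.04798 — 8 statements merged into one kernel-verified Lean document; each statement's English description precedes it below -/
import Mathlib

section
/- Let H be an m×n matrix with entries in {0,1} such that every column of H is nonzero (every variable index i belongs to N(c_j) for some j). For every LPM-feasible pair (f, w): all values f_i (i = 1,…,n) are integers if and only if all values w_{jS} (j ∈ {1,…,m}, S ∈ ε_j) are integers; moreover, in that case all f_i and all w_{jS} lie in {0,1}. -/
open scoped Classical

/-- The neighborhood `N(c_j)` of check node `j`: the variable indices `i` with `H j i = 1`. -/
noncomputable def Ncheck {m n : ℕ} (H : Fin m → Fin n → ℝ) (j : Fin m) : Finset (Fin n) :=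
  Finset.univ.filter fun i => H j i = 1

/-- `ε_j`: the collection of even-cardinality subsets of `N(c_j)` (including `∅`). -/
noncomputable def eps {m n : ℕ} (H : Fin m → Fin n → ℝ) (j : Fin m) :
    Finset (Finset (Fin n)) :=
  (Ncheck H j).powerset.filter fun S => Even S.card

/-- LPM feasibility of a pair `(f, w)`. -/
def LPMFeasible {m n : ℕ} (H : Fin m → Fin n → ℝ)
    (f : Fin n → ℝ) (w : Fin m → Finset (Fin n) → ℝ) : Prop :=
  (∀ i, 0 ≤ f i) ∧
  (∀ j, ∀ S ∈ eps H j, 0 ≤ w j S) ∧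
  (∀ j, ∑ S ∈ eps H j, w j S = 1) ∧
  (∀ j, ∀ i ∈ Ncheck H j, f i = ∑ S ∈ (eps H j).filter (fun S => i ∈ S), w j S)

/-- If every column of `H` is nonzero, then for any LPM-feasible `(f, w)`:
all `f i` are integral iff all `w j S` (for `S ∈ ε_j`) are integral; and in that case
all of them lie in `{0, 1}`. -/
theorem LPM_f_integral_iff_w_integral
    (m n : ℕ) (H : Fin m → Fin n → ℝ)
    (hH : ∀ j i, H j i = 0 ∨ H j i = 1)
    (hcol : ∀ i : Fin n, ∃ j : Fin m, H j i = 1)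
    (f : Fin n → ℝ) (w : Fin m → Finset (Fin n) → ℝ)
    (hfeas : LPMFeasible H f w) :
    ((∀ i, ∃ k : ℤ, f i = (k : ℝ)) ↔
      (∀ j, ∀ S ∈ eps H j, ∃ k : ℤ, w j S = (k : ℝ))) ∧
    ((∀ i, ∃ k : ℤ, f i = (k : ℝ)) →
      (∀ i, f i = 0 ∨ f i = 1) ∧ (∀ j, ∀ S ∈ eps H j, w j S = 0 ∨ w j S = 1)) := by
  obtain ⟨hf0, hw0, hsum, hmarg⟩ := hfeas
  have hf1 : ∀ i, f i ≤ 1 := by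
    intro i
    obtain ⟨j, hj⟩ := hcol i
    have hiN : i ∈ Ncheck H j := Finset.mem_filter.mpr ⟨Finset.mem_univ i, hj⟩
    rw [hmarg j i hiN]
    calc ∑ S ∈ (eps H j).filter (fun S => i ∈ S), w j S
        ≤ ∑ S ∈ eps H j, w j S :=
          Finset.sum_le_sum_of_subset_of_nonneg (Finset.filter_subset _ _)
            (fun S hS _ => hw0 j S hS)
      _ = 1 := hsum j
  -- f integral → f ∈ {0,1}
  have hf01 : (∀ i, ∃ k : ℤ, f i = (k : ℝ)) → ∀ i, f i = 0 ∨ f i = 1 := by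
    intro hint i
    obtain ⟨k, hk⟩ := hint i
    have h0 : (0:ℤ) ≤ k := by exact_mod_cast hk ▸ hf0 i
    have h1 : k ≤ 1 := by exact_mod_cast hk ▸ hf1 i
    interval_cases k
    · left; simpa using hk
    · right; simpa using hk
  -- f ∈ {0,1} → w ∈ {0,1}
  have hw01 : (∀ i, f i = 0 ∨ f i = 1) →
      ∀ j, ∀ S ∈ eps H j, w j S = 0 ∨ w j S = 1 := by
    intro h01 j
    set T : Finset (Fin n) := (Ncheck H j).filter (fun i => f i = 1) with hT
    have hz : ∀ S ∈ eps H j, S ≠ T → w j S = 0 := by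
      intro S hS hST
      have hSN : S ⊆ Ncheck H j := Finset.mem_powerset.mp (Finset.mem_filter.mp hS).1
      have : ∃ i, ¬ (i ∈ S ↔ i ∈ T) := by
        by_contra h
        push_neg at h
        exact hST (Finset.ext h)
      obtain ⟨i, hi⟩ := this
      by_cases hiS : i ∈ S
      · -- i ∈ S, i ∉ T ; then f i = 0, so all w on sets containing i are 0
        have hiT : i ∉ T := fun h => hi ⟨fun _ => h, fun _ => hiS⟩
        have hiN : i ∈ Ncheck H j := hSN hiS
        have hfi : f i = 0 := by
          rcases h01 i with h | h
          · exact h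
          · exact absurd (Finset.mem_filter.mpr ⟨hiN, h⟩) hiT
        have hzero : ∑ S' ∈ (eps H j).filter (fun S' => i ∈ S'), w j S' = 0 := by
          rw [← hmarg j i hiN]; exact hfi
        have := (Finset.sum_eq_zero_iff_of_nonneg
          (fun S' hS' => hw0 j S' (Finset.mem_filter.mp hS').1)).mp hzero
        exact this S (Finset.mem_filter.mpr ⟨hS, hiS⟩)
      · -- i ∉ S, i ∈ T ; f i = 1, sets not containing i carry weight 0
        have hiT : i ∈ T := by
          by_contra h
          exact hi ⟨fun h' => absurd h' hiS, fun h' => absurd h' h⟩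
        have hiN : i ∈ Ncheck H j := (Finset.mem_filter.mp hiT).1
        have hfi : f i = 1 := (Finset.mem_filter.mp hiT).2
        have hsplit := Finset.sum_filter_add_sum_filter_not (eps H j)
          (fun S' => i ∈ S') (w j)
        have hone : ∑ S' ∈ (eps H j).filter (fun S' => i ∈ S'), w j S' = 1 := by
          rw [← hmarg j i hiN]; exact hfi
        have hzero : ∑ S' ∈ (eps H j).filter (fun S' => ¬ i ∈ S'), w j S' = 0 := by
          have := hsum j
          linarith [hsplit, hone, this]
        have := (Finset.sum_eq_zero_iff_of_nonneg
          (fun S' hS' => hw0 j S' (Finset.mem_filter.mp hS').1)).mp hzero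
        exact this S (Finset.mem_filter.mpr ⟨hS, hiS⟩)
    by_cases hTe : T ∈ eps H j
    · have hwT : w j T = 1 := by
        have := Finset.sum_eq_single_of_mem T hTe (fun b hb hbT => hz b hb hbT)
        rw [← this]; exact hsum j
      intro S hS
      by_cases hST : S = T
      · right; rw [hST]; exact hwT
      · left; exact hz S hS hST
    · exfalso
      have : ∑ S ∈ eps H j, w j S = 0 :=
        Finset.sum_eq_zero (fun S hS => hz S hS (by rintro rfl; exact hTe hS))
      rw [hsum j] at this
      norm_num at this
  constructor
  · constructor
    · intro hint j S hS
      rcases hw01 (hf01 hint) j S hS with h | h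
      · exact ⟨0, by simp [h]⟩
      · exact ⟨1, by simp [h]⟩
    · intro hwint i
      obtain ⟨j, hj⟩ := hcol i
      have hiN : i ∈ Ncheck H j := Finset.mem_filter.mpr ⟨Finset.mem_univ i, hj⟩
      classical
      set g : Finset (Fin n) → ℤ :=
        fun S => if h : ∃ k : ℤ, w j S = (k : ℝ) then h.choose else 0 with hgdef
      refine ⟨∑ S ∈ (eps H j).filter (fun S => i ∈ S), g S, ?_⟩
      rw [hmarg j i hiN]
      push_cast
      refine Finset.sum_congr rfl ?_
      intro S hS
      have hSe : S ∈ eps H j := (Finset.mem_filter.mp hS).1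
      have h := hwint j S hSe
      rw [hgdef]
      simp only [dif_pos h]
      exact h.choose_spec
  · intro hint
    exact ⟨hf01 hint, hw01 (hf01 hint)⟩
end

section
/- Let r ∈ {0,1}^n, let 0 < p < 1/2, and set a = log((1−p)/p). Let F ⊆ {0,1}^n be any set of binary feasible solutions, let f̄ ∈ F with z_UB = ∑_i γ_i f̄_i, let B ⊆ {0,1}^n (a branch), and let z ∈ ℝ be a lower bound satisfying z ≤ ∑_i γ_i f_i for every f ∈ F ∩ B. If z > z_UB − a, then every f ∈ F ∩ B satisfies ∑_i γ_i f_i ≥ z_UB; that is, no binary feasible solution in the branch has objective value strictly better than z_UB. -/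
open scoped Classical

lemma sum_mult (n : ℕ) (p a : ℝ) (hp0 : 0 < p) (hp1 : p < 1/2)
    (ha : a = Real.log ((1 - p) / p)) (γ : Fin n → ℝ) (r : Fin n → ℝ)
    (hγ : ∀ i, γ i = if r i = 1 then Real.log (p / (1 - p)) else Real.log ((1 - p) / p))
    (f : Fin n → ℝ) (hf : ∀ i, f i = 0 ∨ f i = 1) :
    ∃ k : ℤ, ∑ i, γ i * f i = a * k := by
  have h1p : (0:ℝ) < 1 - p := by linarith
  have key : ∀ i, ∃ k : ℤ, γ i * f i = a * k := by
    intro i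
    have hlog : Real.log (p / (1 - p)) = -a := by
      rw [ha, ← Real.log_inv]
      congr 1
      field_simp
    rcases hf i with h | h
    · exact ⟨0, by rw [h]; simp⟩
    · rcases Classical.em (r i = 1) with h2 | h2
      · exact ⟨-1, by rw [hγ i, if_pos h2, hlog, h]; push_cast; ring⟩
      · exact ⟨1, by rw [hγ i, if_neg h2, ← ha, h]; push_cast; ring⟩
  choose k hk using key
  exact ⟨∑ i, k i, by rw [Finset.sum_congr rfl (fun i _ => hk i)]; push_cast; rw [Finset.mul_sum]⟩

/-- Pruning rule. If a lower bound `z` on the objective values of the binary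
feasible solutions in a branch `B` satisfies `z > z_UB - a`, where `z_UB` is the
objective value of an incumbent binary feasible solution, then no binary feasible
solution in the branch is strictly better than `z_UB`. -/
theorem pruning_rule
    (n : ℕ) (r : Fin n → ℝ) (hr : ∀ i, r i = 0 ∨ r i = 1)
    (p : ℝ) (hp0 : 0 < p) (hp1 : p < 1 / 2)
    (γ : Fin n → ℝ)
    (hγ : ∀ i, γ i = if r i = 1 then Real.log (p / (1 - p)) else Real.log ((1 - p) / p))
    (a : ℝ) (ha : a = Real.log ((1 - p) / p))
    (F : Set (Fin n → ℝ)) (hFbin : ∀ f ∈ F, ∀ i, f i = 0 ∨ f i = 1)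
    (fbar : Fin n → ℝ) (hfbar : fbar ∈ F)
    (zUB : ℝ) (hzUB : zUB = ∑ i, γ i * fbar i)
    (B : Set (Fin n → ℝ))
    (z : ℝ) (hz : ∀ f ∈ F ∩ B, z ≤ ∑ i, γ i * f i)
    (hprune : z > zUB - a) :
    ∀ f ∈ F ∩ B, zUB ≤ ∑ i, γ i * f i := by
  have h1p : (0:ℝ) < 1 - p := by linarith
  have ha0 : 0 < a := by
    rw [ha]
    apply Real.log_pos
    rw [lt_div_iff₀ hp0]; linarith
  intro f hf
  obtain ⟨m, hm⟩ := sum_mult n p a hp0 hp1 ha γ r hγ fbar (hFbin fbar hfbar)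
  obtain ⟨k, hk⟩ := sum_mult n p a hp0 hp1 ha γ r hγ f (hFbin f hf.1)
  have hzle := hz f hf
  rw [hk] at hzle ⊢
  rw [hzUB, hm] at hprune ⊢
  have : (m:ℝ) - 1 < k := by
    have := lt_of_lt_of_le hprune hzle
    nlinarith
  have hmk : m ≤ k := by
    have h2 : m - 1 < k := by exact_mod_cast this
    omega
  have : (m:ℝ) ≤ k := by exact_mod_cast hmk
  nlinarith
end

section
/- Let a_1 ≤ a_2 ≤ … ≤ a_n be real numbers sorted in nondecreasing order. Then the minimum of ∑_{i∈S} a_i over all subsets S ⊆ {1,…,n} of even cardinality (including S = ∅) equals ∑_{t=1}^{⌊n/2⌋} min(0, a_{2t−1} + a_{2t}). (This is the value computed by the greedy pairing procedure of Algorithm 1, which pairs consecutive elements in sorted order and adds a pair exactly when its sum is negative.) -/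
private lemma sum_range_pair (f : ℕ → ℝ) (k : ℕ) :
    ∑ i ∈ Finset.range (2 * k), f i = ∑ j ∈ Finset.range k, (f (2 * j) + f (2 * j + 1)) := by
  induction k with
  | zero => simp
  | succ k ih =>
    have : 2 * (k + 1) = (2 * k + 1) + 1 := by ring
    rw [this, Finset.sum_range_succ, Finset.sum_range_succ, ih, Finset.sum_range_succ]
    ring

private lemma fin_le_strictMono {m : ℕ} (f : Fin m → ℕ) (hf : StrictMono f) :
    ∀ i : Fin m, (i : ℕ) ≤ f i := by
  rintro ⟨v, hv⟩
  induction v with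
  | zero => exact Nat.zero_le _
  | succ v ih =>
    have hv' : v < m := by omega
    have h1 : f ⟨v, hv'⟩ < f ⟨v + 1, hv⟩ := hf (by simp)
    have h2 := ih hv'
    simp only at *
    omega

/-- For reals `a 0 ≤ a 1 ≤ … ≤ a (n-1)` in nondecreasing order, the minimum
of `∑ i ∈ S, a i` over even-cardinality subsets `S ⊆ {0,…,n-1}` (including `S = ∅`)
equals `∑ t < n/2, min 0 (a (2t) + a (2t+1))`, the value of the greedy pairing
procedure of Algorithm 1. -/
theorem even_subset_min_sum
    (n : ℕ) (a : ℕ → ℝ) (hmono : ∀ i j, i ≤ j → j < n → a i ≤ a j) :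
    IsLeast {x : ℝ | ∃ S ⊆ Finset.range n, Even S.card ∧ x = ∑ i ∈ S, a i}
      (∑ t ∈ Finset.range (n / 2), min 0 (a (2 * t) + a (2 * t + 1))) := by
  constructor
  · -- membership: the greedy set
    set T : Finset ℕ := (Finset.range (n / 2)).filter (fun t => a (2 * t) + a (2 * t + 1) < 0)
      with hT
    refine ⟨T.biUnion (fun t => {2 * t, 2 * t + 1}), ?_, ?_, ?_⟩
    · intro x hx
      simp only [Finset.mem_biUnion, hT, Finset.mem_filter, Finset.mem_range,
        Finset.mem_insert, Finset.mem_singleton] at hx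
      obtain ⟨t, ⟨ht, -⟩, hx⟩ := hx
      simp only [Finset.mem_range]
      omega
    · have hdisj : ∀ x ∈ T, ∀ y ∈ T, x ≠ y →
          Disjoint ({2 * x, 2 * x + 1} : Finset ℕ) {2 * y, 2 * y + 1} := by
        intro x _ y _ hxy
        simp only [Finset.disjoint_left, Finset.mem_insert, Finset.mem_singleton]
        omega
      rw [Finset.card_biUnion hdisj]
      have : ∀ t ∈ T, ({2 * t, 2 * t + 1} : Finset ℕ).card = 2 := by
        intro t _
        rw [Finset.card_insert_of_notMem (by simp), Finset.card_singleton]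
      rw [Finset.sum_congr rfl this]
      simp [Finset.sum_const, even_iff_two_dvd]
    · have hdisj : ∀ x ∈ T, ∀ y ∈ T, x ≠ y →
          Disjoint ({2 * x, 2 * x + 1} : Finset ℕ) {2 * y, 2 * y + 1} := by
        intro x _ y _ hxy
        simp only [Finset.disjoint_left, Finset.mem_insert, Finset.mem_singleton]
        omega
      rw [Finset.sum_biUnion ?_]
      · have h1 : ∀ t ∈ T, ∑ i ∈ ({2 * t, 2 * t + 1} : Finset ℕ), a i
            = a (2 * t) + a (2 * t + 1) := by
          intro t _
          rw [Finset.sum_insert (by simp), Finset.sum_singleton]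
        rw [Finset.sum_congr rfl h1, hT, Finset.sum_filter]
        apply Finset.sum_congr rfl
        intro t _
        by_cases h : a (2 * t) + a (2 * t + 1) < 0
        · simp [h, min_eq_right h.le]
        · simp [h, min_eq_left (not_lt.mp h)]
      · intro x hx y hy hxy
        exact hdisj x hx y hy hxy
  · -- lower bound
    rintro x ⟨S, hSsub, ⟨k, hk⟩, rfl⟩
    have hcard : S.card = 2 * k := by omega
    set e := S.orderEmbOfFin hcard with he
    have hmem : ∀ i : Fin (2 * k), e i ∈ S := fun i => S.orderEmbOfFin_mem hcard i
    have hlt : ∀ i : Fin (2 * k), e i < n := by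
      intro i
      have := hSsub (hmem i)
      simpa [Finset.mem_range] using this
    have hge : ∀ i : Fin (2 * k), (i : ℕ) ≤ e i :=
      fin_le_strictMono e (S.orderEmbOfFin (hcard)).strictMono
    -- rewrite sum over S as sum over Fin (2k)
    have hsum : ∑ i ∈ S, a i = ∑ i : Fin (2 * k), a (e i) := by
      have himg : S = Finset.univ.image e := by
        ext x
        simp only [Finset.mem_image, Finset.mem_univ, true_and]
        constructor
        · intro hx
          have hr := Finset.range_orderEmbOfFin S hcard
          have : x ∈ Set.range (S.orderEmbOfFin hcard) := by
            rw [hr]; exact hx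
          obtain ⟨i, hi⟩ := this
          exact ⟨i, hi⟩
        · rintro ⟨i, rfl⟩; exact hmem i
      rw [himg, Finset.sum_image (fun i _ j _ h => (S.orderEmbOfFin hcard).injective h)]
    -- define b : ℕ → ℝ
    have hfin : ∑ i : Fin (2 * k), a (e i)
        = ∑ i ∈ Finset.range (2 * k), (fun i => if h : i < 2 * k then a (e ⟨i, h⟩) else 0) i := by
      rw [← Fin.sum_univ_eq_sum_range]
      apply Finset.sum_congr rfl
      intro i _
      simp [i.isLt]
    set b : ℕ → ℝ := fun i => if h : i < 2 * k then a (e ⟨i, h⟩) else 0 with hb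
    have hkn : k ≤ n / 2 := by
      have := Finset.card_le_card hSsub
      rw [hcard, Finset.card_range] at this
      omega
    have step1 : ∑ t ∈ Finset.range (n / 2), min 0 (a (2 * t) + a (2 * t + 1))
        ≤ ∑ t ∈ Finset.range k, min 0 (a (2 * t) + a (2 * t + 1)) := by
      have hneg := Finset.sum_le_sum_of_subset_of_nonneg
        (f := fun t => -(min 0 (a (2 * t) + a (2 * t + 1)))) (Finset.range_subset_range.mpr hkn)
        (fun i _ _ => by simp)
      simp only [Finset.sum_neg_distrib] at hneg
      linarith
    have step2 : ∑ t ∈ Finset.range k, min 0 (a (2 * t) + a (2 * t + 1))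
        ≤ ∑ t ∈ Finset.range k, (b (2 * t) + b (2 * t + 1)) := by
      apply Finset.sum_le_sum
      intro t ht
      simp only [Finset.mem_range] at ht
      have h1 : 2 * t < 2 * k := by omega
      have h2 : 2 * t + 1 < 2 * k := by omega
      have e1 : b (2 * t) = a (e ⟨2 * t, h1⟩) := by simp [hb, h1]
      have e2 : b (2 * t + 1) = a (e ⟨2 * t + 1, h2⟩) := by simp [hb, h2]
      rw [e1, e2]
      have ha1 : a (2 * t) ≤ a (e ⟨2 * t, h1⟩) :=
        hmono _ _ (hge ⟨2 * t, h1⟩) (hlt _)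
      have ha2 : a (2 * t + 1) ≤ a (e ⟨2 * t + 1, h2⟩) :=
        hmono _ _ (hge ⟨2 * t + 1, h2⟩) (hlt _)
      calc min 0 (a (2 * t) + a (2 * t + 1)) ≤ a (2 * t) + a (2 * t + 1) := min_le_right _ _
        _ ≤ _ := add_le_add ha1 ha2
    rw [hsum, hfin, sum_range_pair b k]
    exact le_trans step1 step2
end

section
/- Let n ≥ 1 and let a_1 ≤ a_2 ≤ … ≤ a_n be real numbers sorted in nondecreasing order. Then the minimum of ∑_{i∈S} a_i over all subsets S ⊆ {1,…,n} of odd cardinality equals a_1 + ∑_{t=1}^{⌊(n−1)/2⌋} min(0, a_{2t} + a_{2t+1}). (This is the value computed by Algorithm 2 on a branch where the forced part of the codeword has odd size: the smallest element is added first, even if it is positive, and thereafter consecutive pairs are added exactly when their sum is negative.) -/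
lemma sum_range_odd_split (F : ℕ → ℝ) (k : ℕ) :
    ∑ i ∈ Finset.range (2 * k + 1), F i
      = F 0 + ∑ j ∈ Finset.range k, (F (2 * j + 1) + F (2 * j + 2)) := by
  induction k with
  | zero => simp
  | succ k ih =>
    have h1 : 2 * (k + 1) + 1 = (2 * k + 1) + 1 + 1 := by ring
    rw [h1, Finset.sum_range_succ, Finset.sum_range_succ, ih, Finset.sum_range_succ]
    have h2 : 2 * k + 1 + 1 = 2 * k + 2 := by ring
    rw [h2]
    ring

lemma fin_strictMono_le {c : ℕ} (f : Fin c → ℕ) (hf : StrictMono f) :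
    ∀ i : Fin c, (i : ℕ) ≤ f i := by
  intro i
  obtain ⟨i, hi⟩ := i
  induction i with
  | zero => exact Nat.zero_le _
  | succ i ih =>
    have hi' : i < c := by omega
    have := hf (show (⟨i, hi'⟩ : Fin c) < ⟨i + 1, hi⟩ by simp [Fin.lt_def])
    have h2 := ih hi'
    simp only [Fin.val_mk] at this h2 ⊢
    omega



/-- For `n ≥ 1` and reals `a 0 ≤ a 1 ≤ … ≤ a (n-1)` in nondecreasing order,
the minimum of `∑ i ∈ S, a i` over odd-cardinality subsets `S ⊆ {0,…,n-1}` equals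
`a 0 + ∑ t < (n-1)/2, min 0 (a (2t+1) + a (2t+2))`, the value computed by Algorithm 2
on a branch whose forced part has odd size. -/
theorem odd_subset_min_sum
    (n : ℕ) (hn : 1 ≤ n) (a : ℕ → ℝ) (hmono : ∀ i j, i ≤ j → j < n → a i ≤ a j) :
    IsLeast {x : ℝ | ∃ S ⊆ Finset.range n, Odd S.card ∧ x = ∑ i ∈ S, a i}
      (a 0 + ∑ t ∈ Finset.range ((n - 1) / 2), min 0 (a (2 * t + 1) + a (2 * t + 2))) := by
  set m := (n - 1) / 2 with hm
  constructor
  · -- membership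
    set T := (Finset.range m).filter (fun t => a (2 * t + 1) + a (2 * t + 2) < 0) with hT
    refine ⟨insert 0 (T.biUnion (fun t => {2 * t + 1, 2 * t + 2})), ?_, ?_, ?_⟩
    · intro x hx
      simp only [Finset.mem_insert, Finset.mem_biUnion, hT, Finset.mem_filter,
        Finset.mem_range, Finset.mem_insert, Finset.mem_singleton] at hx
      rcases hx with rfl | ⟨t, ⟨ht, _⟩, rfl | rfl⟩ <;>
        simp only [Finset.mem_range] <;> omega
    · have hdisj : ∀ t ∈ T, ∀ t' ∈ T, t ≠ t' →
          Disjoint ({2 * t + 1, 2 * t + 2} : Finset ℕ) {2 * t' + 1, 2 * t' + 2} := by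
        intro t _ t' _ hne
        simp only [Finset.disjoint_left, Finset.mem_insert, Finset.mem_singleton]
        omega
      have h0 : (0 : ℕ) ∉ T.biUnion (fun t => {2 * t + 1, 2 * t + 2}) := by
        simp only [Finset.mem_biUnion, Finset.mem_insert, Finset.mem_singleton]
        push_neg
        intro t _
        omega
      rw [Finset.card_insert_of_notMem h0, Finset.card_biUnion hdisj]
      have : ∀ t ∈ T, ({2 * t + 1, 2 * t + 2} : Finset ℕ).card = 2 := by
        intro t _
        rw [Finset.card_insert_of_notMem (by simp), Finset.card_singleton]
      rw [Finset.sum_congr rfl this]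
      exact ⟨T.card, by rw [Finset.sum_const, smul_eq_mul]; ring⟩
    · have hdisj : ∀ t ∈ T, ∀ t' ∈ T, t ≠ t' →
          Disjoint ({2 * t + 1, 2 * t + 2} : Finset ℕ) {2 * t' + 1, 2 * t' + 2} := by
        intro t _ t' _ hne
        simp only [Finset.disjoint_left, Finset.mem_insert, Finset.mem_singleton]
        omega
      have h0 : (0 : ℕ) ∉ T.biUnion (fun t => {2 * t + 1, 2 * t + 2}) := by
        simp only [Finset.mem_biUnion, Finset.mem_insert, Finset.mem_singleton]
        push_neg
        intro t _
        omega
      rw [Finset.sum_insert h0, Finset.sum_biUnion]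
      · congr 1
        have hpair : ∀ t ∈ T, ∑ i ∈ ({2 * t + 1, 2 * t + 2} : Finset ℕ), a i
            = a (2 * t + 1) + a (2 * t + 2) := by
          intro t _
          rw [Finset.sum_pair (by omega)]
        rw [Finset.sum_congr rfl hpair, hT, Finset.sum_filter]
        refine Finset.sum_congr rfl fun t _ => ?_
        split_ifs with h
        · exact min_eq_right h.le
        · exact min_eq_left (not_lt.mp h)
      · intro t ht t' ht' hne
        exact hdisj t ht t' ht' hne
  · -- lower bound
    rintro x ⟨S, hS, hodd, rfl⟩
    obtain ⟨k, hk⟩ := hodd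
    have hcard : S.card = 2 * k + 1 := by omega
    set f := S.orderEmbOfFin hcard with hf
    have hfS : ∀ i, f i ∈ S := fun i => Finset.orderEmbOfFin_mem S hcard i
    have hfn : ∀ i, f i < n := fun i => Finset.mem_range.mp (hS (hfS i))
    have hle : ∀ i : Fin (2 * k + 1), (i : ℕ) ≤ f i :=
      fin_strictMono_le f (OrderEmbedding.strictMono f)
    -- rewrite sum over S as sum over Fin
    have himg : Finset.image f Finset.univ = S := by
      apply Finset.coe_injective
      rw [Finset.coe_image, Finset.coe_univ, Set.image_univ,
        Finset.range_orderEmbOfFin S hcard]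
    have hsum1 : ∑ i ∈ S, a i = ∑ i : Fin (2 * k + 1), a (f i) := by
      rw [← himg, Finset.sum_image (fun x _ y _ h => f.injective h)]
    set F : ℕ → ℝ := fun i => if h : i < 2 * k + 1 then a (f ⟨i, h⟩) else 0 with hF
    have hsum2 : ∑ i : Fin (2 * k + 1), a (f i) = ∑ i ∈ Finset.range (2 * k + 1), F i := by
      rw [← Fin.sum_univ_eq_sum_range]
      refine Finset.sum_congr rfl fun i _ => ?_
      simp only [hF]
      rw [dif_pos i.isLt]
    have hkm : k ≤ m := by
      have := Finset.card_le_card hS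
      rw [Finset.card_range] at this
      omega
    rw [hsum1, hsum2, sum_range_odd_split]
    have h0 : a 0 ≤ F 0 := by
      simp only [hF]
      rw [dif_pos (by omega : 0 < 2 * k + 1)]
      exact hmono 0 _ (Nat.zero_le _) (hfn _)
    have hpair : ∀ j ∈ Finset.range k,
        min 0 (a (2 * j + 1) + a (2 * j + 2)) ≤ F (2 * j + 1) + F (2 * j + 2) := by
      intro j hj
      rw [Finset.mem_range] at hj
      have h1 : 2 * j + 1 < 2 * k + 1 := by omega
      have h2 : 2 * j + 2 < 2 * k + 1 := by omega
      simp only [hF]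
      rw [dif_pos h1, dif_pos h2]
      have e1 : a (2 * j + 1) ≤ a (f ⟨2 * j + 1, h1⟩) :=
        hmono _ _ (hle ⟨2 * j + 1, h1⟩) (hfn _)
      have e2 : a (2 * j + 2) ≤ a (f ⟨2 * j + 2, h2⟩) :=
        hmono _ _ (hle ⟨2 * j + 2, h2⟩) (hfn _)
      calc min 0 (a (2 * j + 1) + a (2 * j + 2)) ≤ a (2 * j + 1) + a (2 * j + 2) :=
            min_le_right _ _
        _ ≤ _ := by linarith
    have hmono_sum : ∑ t ∈ Finset.range m, min 0 (a (2 * t + 1) + a (2 * t + 2))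
        ≤ ∑ t ∈ Finset.range k, min 0 (a (2 * t + 1) + a (2 * t + 2)) := by
      rw [Finset.range_eq_Ico,
        ← Finset.sum_Ico_consecutive _ (Nat.zero_le k) hkm]
      have : ∑ t ∈ Finset.Ico k m, min 0 (a (2 * t + 1) + a (2 * t + 2)) ≤ 0 :=
        Finset.sum_nonpos fun t _ => min_le_left _ _
      rw [Finset.range_eq_Ico]
      linarith
    have := Finset.sum_le_sum hpair
    linarith
end

section
/- Let H be an m×n matrix with entries in {0,1} and let (f, w) be LPM-feasible with w real-valued (possibly fractional). If f is binary, i.e., f ∈ {0,1}^n, then f is a codeword: ∑_{i∈N(c_j)} f_i is even for every j. (In particular, every integral point of the LPM feasible region projects to a codeword.) -/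
open scoped Classical

/-- If `(f, w)` is LPM-feasible (with `w` possibly fractional) and `f` is
binary, then `f` is a codeword: each check's parity sum is even. -/
theorem LPM_integral_point_is_codeword
    (m n : ℕ) (H : Fin m → Fin n → ℝ)
    (hH : ∀ j i, H j i = 0 ∨ H j i = 1)
    (f : Fin n → ℝ) (w : Fin m → Finset (Fin n) → ℝ)
    (hfeas : LPMFeasible H f w)
    (hfbin : ∀ i, f i = 0 ∨ f i = 1) :
    ∀ j : Fin m, ∃ k : ℤ, (∑ i ∈ Ncheck H j, f i) = 2 * (k : ℝ) := by
  obtain ⟨hf0, hw0, hw1, hcons⟩ := hfeas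
  intro j
  -- find a subset with positive weight
  have hex : ∃ S ∈ eps H j, w j S ≠ 0 := by
    by_contra hc
    push_neg at hc
    have : (∑ S ∈ eps H j, w j S) = 0 := Finset.sum_eq_zero hc
    rw [hw1 j] at this; norm_num at this
  obtain ⟨S, hS, hSne⟩ := hex
  have hSpos : 0 < w j S := lt_of_le_of_ne (hw0 j S hS) (Ne.symm hSne)
  have hSsub : S ⊆ Ncheck H j := by
    have := (Finset.mem_filter.mp hS).1
    exact Finset.mem_powerset.mp this
  have hSeven : Even S.card := (Finset.mem_filter.mp hS).2
  -- characterize membership in S for i ∈ N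
  have hmem : ∀ i ∈ Ncheck H j, (i ∈ S ↔ f i = 1) := by
    intro i hi
    constructor
    · intro hiS
      rcases hfbin i with h0 | h1
      · -- f i = 0 but sum over S containing i includes positive w j S : contradiction
        exfalso
        have hsum := hcons j i hi
        rw [h0] at hsum
        have hterm : ∀ T ∈ (eps H j).filter (fun T => i ∈ T), w j T = 0 := by
          intro T hT
          have hT' := Finset.mem_filter.mp hT
          have := hw0 j T hT'.1
          by_contra hne
          have hpos : 0 < w j T := lt_of_le_of_ne this (Ne.symm hne)
          have : 0 < ∑ T ∈ (eps H j).filter (fun T => i ∈ T), w j T :=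
            Finset.sum_pos' (fun T' hT'' => hw0 j T' (Finset.mem_filter.mp hT'').1)
              ⟨T, hT, hpos⟩
          linarith [hsum]
        have : w j S = 0 := hterm S (Finset.mem_filter.mpr ⟨hS, hiS⟩)
        exact hSne this
      · exact h1
    · intro h1
      by_contra hiS
      -- f i = 1 = total weight, so weight on sets not containing i is 0
      have hsum := hcons j i hi
      rw [h1] at hsum
      have hsplit : (∑ T ∈ (eps H j).filter (fun T => i ∈ T), w j T)
          + (∑ T ∈ (eps H j).filter (fun T => ¬ i ∈ T), w j T) = 1 := by
        rw [Finset.sum_filter_add_sum_filter_not]; exact hw1 j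
      have hzero : (∑ T ∈ (eps H j).filter (fun T => ¬ i ∈ T), w j T) = 0 := by
        linarith [hsum]
      have : w j S = 0 := by
        have hSmem : S ∈ (eps H j).filter (fun T => ¬ i ∈ T) :=
          Finset.mem_filter.mpr ⟨hS, hiS⟩
        have hnn : ∀ T ∈ (eps H j).filter (fun T => ¬ i ∈ T), 0 ≤ w j T :=
          fun T hT => hw0 j T (Finset.mem_filter.mp hT).1
        exact (Finset.sum_eq_zero_iff_of_nonneg hnn).mp hzero S hSmem
      exact hSne this
  -- S equals the set of i in N with f i = 1
  have hSeq : S = (Ncheck H j).filter (fun i => f i = 1) := by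
    ext i
    simp only [Finset.mem_filter]
    constructor
    · intro hiS
      exact ⟨hSsub hiS, (hmem i (hSsub hiS)).mp hiS⟩
    · rintro ⟨hiN, hf1⟩
      exact (hmem i hiN).mpr hf1
  -- compute the sum
  have hsum : (∑ i ∈ Ncheck H j, f i) = (S.card : ℝ) := by
    rw [hSeq]
    rw [← Finset.sum_filter_add_sum_filter_not (Ncheck H j) (fun i => f i = 1) f]
    have h1 : (∑ i ∈ (Ncheck H j).filter (fun i => f i = 1), f i)
        = ((Ncheck H j).filter (fun i => f i = 1)).card := by
      rw [Finset.sum_congr rfl (fun i hi => (Finset.mem_filter.mp hi).2)]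
      simp
    have h2 : (∑ i ∈ (Ncheck H j).filter (fun i => ¬ f i = 1), f i) = 0 := by
      apply Finset.sum_eq_zero
      intro i hi
      rcases hfbin i with h | h
      · exact h
      · exact absurd h (Finset.mem_filter.mp hi).2
    rw [h1, h2, add_zero]
  obtain ⟨r, hr⟩ := hSeven
  refine ⟨(r : ℤ), ?_⟩
  rw [hsum, hr]
  push_cast
  ring
end

section
/- Let H be an m×n matrix with entries in {0,1}. A binary vector f ∈ {0,1}^n is a codeword (∑_{i∈N(c_j)} f_i even for every j) if and only if there exists a binary assignment w with w_{jS} ∈ {0,1} for every j and S ∈ ε_j such that (f, w) is LPM-feasible; in the forward direction one may take, for each j, w_{jS_j} = 1 for S_j = {i ∈ N(c_j) : f_i = 1} and w_{jS} = 0 for all other S ∈ ε_j. (Thus the binary vectors f appearing in feasible solutions of the IPM formulation are exactly the codewords.) -/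
open scoped Classical

/-- `f` is a codeword: each check's parity sum is even. -/
def IsCodeword {m n : ℕ} (H : Fin m → Fin n → ℝ) (f : Fin n → ℝ) : Prop :=
  ∀ j : Fin m, ∃ k : ℤ, (∑ i ∈ Ncheck H j, f i) = 2 * (k : ℝ)

/-- A binary vector `f` is a codeword iff there is a binary assignment `w`
with `(f, w)` LPM-feasible; in the forward direction one may take, for each `j`,
`w j S = 1` exactly for `S = {i ∈ N(c_j) : f i = 1}` and `0` otherwise. -/
theorem codeword_iff_binary_LPM_feasible
    (m n : ℕ) (H : Fin m → Fin n → ℝ)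
    (hH : ∀ j i, H j i = 0 ∨ H j i = 1)
    (f : Fin n → ℝ) (hfbin : ∀ i, f i = 0 ∨ f i = 1) :
    (IsCodeword H f ↔
      ∃ w : Fin m → Finset (Fin n) → ℝ,
        (∀ j, ∀ S ∈ eps H j, w j S = 0 ∨ w j S = 1) ∧ LPMFeasible H f w) ∧
    (IsCodeword H f →
      LPMFeasible H f
        (fun j S => if S = (Ncheck H j).filter (fun i => f i = 1) then 1 else 0)) := by
  classical
  -- the parity sum equals the cardinality of the support within the check
  have key : ∀ j, (∑ i ∈ Ncheck H j, f i)
      = (((Ncheck H j).filter (fun i => f i = 1)).card : ℝ) := by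
    intro j
    have h1 : ∀ i ∈ Ncheck H j, f i = if f i = 1 then (1:ℝ) else 0 := by
      intro i _
      rcases hfbin i with h | h <;> simp [h]
    rw [Finset.sum_congr rfl h1, Finset.sum_boole]
  -- forward construction is feasible
  have feas : IsCodeword H f →
      LPMFeasible H f
        (fun j S => if S = (Ncheck H j).filter (fun i => f i = 1) then 1 else 0) := by
    intro hcw
    have hSmem : ∀ j, (Ncheck H j).filter (fun i => f i = 1) ∈ eps H j := by
      intro j
      obtain ⟨k, hk⟩ := hcw j
      rw [key j] at hk
      have hkz : (((Ncheck H j).filter (fun i => f i = 1)).card : ℤ) = 2 * k := by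
        exact_mod_cast hk
      have hev : Even ((Ncheck H j).filter (fun i => f i = 1)).card := by
        have : Even (((Ncheck H j).filter (fun i => f i = 1)).card : ℤ) := ⟨k, by omega⟩
        exact_mod_cast this
      simp [eps, Finset.mem_filter, Finset.mem_powerset, Finset.filter_subset, hev]
    refine ⟨?_, ?_, ?_, ?_⟩
    · intro i; rcases hfbin i with h | h <;> simp [h]
    · intro j S _; dsimp only; split <;> norm_num
    · intro j
      rw [Finset.sum_ite_eq' (eps H j)]
      simp [hSmem j]
    · intro j i hi
      rw [Finset.sum_ite_eq' ((eps H j).filter (fun S => i ∈ S))]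
      by_cases hfi : f i = 1
      · have : (Ncheck H j).filter (fun i => f i = 1) ∈
            (eps H j).filter (fun S => i ∈ S) := by
          simp [Finset.mem_filter, hSmem j, hi, hfi]
        simp [this, hfi]
      · have hfi0 : f i = 0 := (hfbin i).resolve_right hfi
        have : (Ncheck H j).filter (fun i => f i = 1) ∉
            (eps H j).filter (fun S => i ∈ S) := by
          simp [Finset.mem_filter, hSmem j, hfi]
        simp [this, hfi0]
  refine ⟨⟨fun hcw => ⟨_, ?_, feas hcw⟩, ?_⟩, feas⟩
  · intro j S _
    by_cases h : S = (Ncheck H j).filter (fun i => f i = 1) <;> simp [h]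
  · rintro ⟨w, hwbin, hf0, hw0, hsum1, hmarg⟩
    intro j
    -- rewrite the parity sum by swapping the double sum
    have swap : (∑ i ∈ Ncheck H j, f i)
        = ∑ S ∈ eps H j, (S.card : ℝ) * w j S := by
      calc (∑ i ∈ Ncheck H j, f i)
          = ∑ i ∈ Ncheck H j, ∑ S ∈ (eps H j).filter (fun S => i ∈ S), w j S :=
            Finset.sum_congr rfl (fun i hi => hmarg j i hi)
        _ = ∑ i ∈ Ncheck H j, ∑ S ∈ eps H j, if i ∈ S then w j S else 0 := by
            refine Finset.sum_congr rfl fun i _ => ?_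
            rw [Finset.sum_filter]
        _ = ∑ S ∈ eps H j, ∑ i ∈ Ncheck H j, if i ∈ S then w j S else 0 :=
            Finset.sum_comm
        _ = ∑ S ∈ eps H j, (S.card : ℝ) * w j S := by
            refine Finset.sum_congr rfl fun S hS => ?_
            have hsub : S ⊆ Ncheck H j := by
              have := (Finset.mem_filter.mp hS).1
              exact Finset.mem_powerset.mp this
            rw [← Finset.sum_filter, Finset.sum_const,
              Finset.filter_mem_eq_inter, Finset.inter_eq_right.mpr hsub]
            simp [mul_comm]
    -- only the S with w j S = 1 contribute
    have step2 : (∑ S ∈ eps H j, (S.card : ℝ) * w j S)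
        = ∑ S ∈ (eps H j).filter (fun S => w j S = 1), (S.card : ℝ) := by
      rw [Finset.sum_filter]
      refine Finset.sum_congr rfl fun S hS => ?_
      rcases hwbin j S hS with h | h <;> simp [h]
    -- the cardinalities are all even
    have hevensum : (∑ S ∈ (eps H j).filter (fun S => w j S = 1), S.card)
        = 2 * ∑ S ∈ (eps H j).filter (fun S => w j S = 1), S.card / 2 := by
      rw [Finset.mul_sum]
      refine Finset.sum_congr rfl fun S hS => ?_
      have hev : Even S.card :=
        (Finset.mem_filter.mp ((Finset.mem_filter.mp hS).1)).2
      obtain ⟨t, ht⟩ := hev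
      omega
    refine ⟨(∑ S ∈ (eps H j).filter (fun S => w j S = 1), S.card / 2 : ℕ), ?_⟩
    rw [swap, step2]
    push_cast [← Nat.cast_sum]
    exact_mod_cast congrArg (fun x : ℕ => (x : ℝ)) hevensum
end

section
/- Let H be an m×n matrix with entries in {0,1} and let f ∈ {0,1}^n be a codeword. Then for every check index j and every subset S ⊆ N(c_j) of odd cardinality, the inequality ∑_{i∈N(c_j)∖S} f_i + ∑_{i∈S} (1 − f_i) ≥ 1 holds. (These are the valid cuts used in the branch–price–and–cut method: they are satisfied by every codeword and hence valid for the IPM formulation.) -/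
open scoped Classical

/-- Every codeword `f` satisfies, for each check `j` and each odd-cardinality
subset `S ⊆ N(c_j)`, the valid cut
`∑_{i ∈ N(c_j) \ S} f i + ∑_{i ∈ S} (1 - f i) ≥ 1`. -/
theorem valid_cuts_hold_for_codewords
    (m n : ℕ) (H : Fin m → Fin n → ℝ)
    (hH : ∀ j i, H j i = 0 ∨ H j i = 1)
    (f : Fin n → ℝ) (hfbin : ∀ i, f i = 0 ∨ f i = 1)
    (hcode : ∀ j : Fin m, ∃ k : ℤ, (∑ i ∈ Ncheck H j, f i) = 2 * (k : ℝ)) :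
    ∀ j : Fin m, ∀ S ⊆ Ncheck H j, Odd S.card →
      1 ≤ (∑ i ∈ Ncheck H j \ S, f i) + ∑ i ∈ S, (1 - f i) := by
  intro j S hS hodd
  obtain ⟨k, hk⟩ := hcode j
  -- ∑_S f is an integer
  set z : ℤ := ∑ i ∈ S, (if f i = 1 then (1 : ℤ) else 0) with hz
  have hzS : (∑ i ∈ S, f i) = (z : ℝ) := by
    rw [hz]
    push_cast
    refine Finset.sum_congr rfl fun i _ => ?_
    rcases hfbin i with h | h <;> simp [h]
  -- split the sum over N(c_j)
  have hsplit : (∑ i ∈ Ncheck H j \ S, f i) + ∑ i ∈ S, f i = ∑ i ∈ Ncheck H j, f i :=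
    Finset.sum_sdiff hS
  have hSsum : (∑ i ∈ S, (1 - f i)) = (S.card : ℝ) - ∑ i ∈ S, f i := by
    rw [Finset.sum_sub_distrib]; simp
  set E : ℝ := (∑ i ∈ Ncheck H j \ S, f i) + ∑ i ∈ S, (1 - f i) with hE
  have hEval : E = ((2 * k - 2 * z + S.card : ℤ) : ℝ) := by
    have : (∑ i ∈ Ncheck H j \ S, f i) = 2 * (k : ℝ) - ∑ i ∈ S, f i := by
      linarith [hsplit, hk]
    rw [hE, this, hSsum, hzS]
    push_cast
    ring
  have hEnonneg : 0 ≤ E := by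
    rw [hE]
    apply add_nonneg
    · exact Finset.sum_nonneg fun i _ => by rcases hfbin i with h | h <;> simp [h]
    · exact Finset.sum_nonneg fun i _ => by rcases hfbin i with h | h <;> simp [h]
  have hwodd : Odd (2 * k - 2 * z + S.card : ℤ) := by
    obtain ⟨c, hc⟩ := hodd
    refine ⟨k - z + c, ?_⟩
    have : (S.card : ℤ) = 2 * c + 1 := by exact_mod_cast hc
    omega
  have hwnonneg : 0 ≤ (2 * k - 2 * z + S.card : ℤ) := by
    have := hEnonneg
    rw [hEval] at this
    exact_mod_cast this
  have hw1 : 1 ≤ (2 * k - 2 * z + S.card : ℤ) := by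
    rcases hwodd with ⟨c, hc⟩; omega
  rw [hEval]
  exact_mod_cast hw1
end

section
/- Let H be an m×n matrix with entries in {0,1}, let f ∈ [0,1]^n, fix a check index j and an odd integer s with 1 ≤ s ≤ |N(c_j)|. Then the minimum over all subsets S ⊆ N(c_j) with |S| = s of the left-hand side ∑_{i∈N(c_j)∖S} f_i + ∑_{i∈S} (1 − f_i) is attained by taking S to consist of s indices i ∈ N(c_j) with the largest values f_i. (Hence examining, for each j and each odd s, the set of s largest f-values among N(c_j), as in Algorithm 6, finds a violated cut of this family whenever one exists.) -/
open scoped Classical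

/-- For `f ∈ [0,1]^n`, a check `j` and an odd `s ≤ |N(c_j)|`, the minimum of
the cut left-hand side `∑_{i ∈ N(c_j) \ S} f i + ∑_{i ∈ S} (1 - f i)` over subsets
`S ⊆ N(c_j)` with `|S| = s` is attained by any set `T` consisting of `s` indices with
the largest `f`-values among `N(c_j)`. -/
theorem cut_lhs_minimized_by_largest_values
    (m n : ℕ) (H : Fin m → Fin n → ℝ)
    (hH : ∀ j i, H j i = 0 ∨ H j i = 1)
    (f : Fin n → ℝ) (hf : ∀ i, 0 ≤ f i ∧ f i ≤ 1)
    (j : Fin m) (s : ℕ) (hs_odd : Odd s) (hs_pos : 1 ≤ s) (hs_le : s ≤ (Ncheck H j).card) :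
    ∀ T ⊆ Ncheck H j, T.card = s →
      (∀ i ∈ T, ∀ i' ∈ Ncheck H j \ T, f i' ≤ f i) →
      ∀ S ⊆ Ncheck H j, S.card = s →
        (∑ i ∈ Ncheck H j \ T, f i) + (∑ i ∈ T, (1 - f i)) ≤
          (∑ i ∈ Ncheck H j \ S, f i) + ∑ i ∈ S, (1 - f i) := by
  intro T hT hTcard hTmax S hS hScard
  set N := Ncheck H j
  -- key: ∑_S f ≤ ∑_T f
  have key : (∑ i ∈ S, f i) ≤ ∑ i ∈ T, f i := by
    have hcard : (S \ T).card = (T \ S).card := by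
      have h1 := Finset.card_sdiff_add_card_inter S T
      have h2 := Finset.card_sdiff_add_card_inter T S
      rw [Finset.inter_comm] at h2
      omega
    have hle : (∑ i ∈ S \ T, f i) ≤ ∑ i ∈ T \ S, f i := by
      let e := Finset.equivOfCardEq hcard
      calc (∑ i ∈ S \ T, f i) = ∑ x ∈ (S \ T).attach, f x := (Finset.sum_attach _ _).symm
        _ ≤ ∑ x ∈ (S \ T).attach, f (e x) := by
            apply Finset.sum_le_sum
            intro x _
            have hx : (x : Fin n) ∈ N \ T := by
              have hxS := x.2
              rw [Finset.mem_sdiff] at hxS ⊢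
              exact ⟨hS hxS.1, hxS.2⟩
            have hex : ((e x : Fin n)) ∈ T := (Finset.mem_sdiff.mp (e x).2).1
            exact hTmax _ hex _ hx
        _ = ∑ y ∈ (T \ S).attach, f y := by
            exact Finset.sum_bijective e e.bijective (by simp) (fun x _ => rfl)
        _ = ∑ i ∈ T \ S, f i := Finset.sum_attach _ _
    have hS' : (∑ i ∈ S ∩ T, f i) + ∑ i ∈ S \ T, f i = ∑ i ∈ S, f i :=
      Finset.sum_inter_add_sum_sdiff S T f
    have hT' : (∑ i ∈ T ∩ S, f i) + ∑ i ∈ T \ S, f i = ∑ i ∈ T, f i :=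
      Finset.sum_inter_add_sum_sdiff T S f
    rw [Finset.inter_comm] at hT'
    linarith [hle]
  have expand : ∀ U ⊆ N, U.card = s →
      (∑ i ∈ N \ U, f i) + (∑ i ∈ U, (1 - f i)) =
        (∑ i ∈ N, f i) + s - 2 * ∑ i ∈ U, f i := by
    intro U hU hUcard
    have h1 : (∑ i ∈ N \ U, f i) = (∑ i ∈ N, f i) - ∑ i ∈ U, f i :=
      Finset.sum_sdiff_eq_sub hU
    have h2 : (∑ i ∈ U, (1 - f i)) = (s : ℝ) - ∑ i ∈ U, f i := by
      rw [Finset.sum_sub_distrib, Finset.sum_const, hUcard]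
      simp
    rw [h1, h2]; ring
  rw [expand T hT hTcard, expand S hS hScard]
  linarith
end
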